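/- arXiv:2312.01586 — 2 statements merged into one kernel-verified Lean document; each statement's English description precedes it below -/
import Mathlib

section
/- Let ξ_t be a sequence of random variables, each supported on a common finite set S ⊂ ℝ, with probability mass functions p_t : S → [0,1], and suppose p_t converges pointwise to a probability mass function p on S, with limiting random variable ξ distributed by p. Then for α ∈ (0,1), CVaR_α(ξ_t) → CVaR_α(ξ) as t → ∞. Moreover, |CVaR_α(ξ_t) − CVaR_α(ξ)| ≤ ((U−L)/(1−α)) · Σ_{s∈S} |p_t(s) − p(s)|, where L = min S and U = max S. -/
open Filter

/-- CVaR at level `α` of the distribution on the finite support `S` with pmf `q`. -/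
noncomputable def finCVaR (S : Finset ℝ) (hS : S.Nonempty) (α : ℝ) (q : ℝ → ℝ) : ℝ :=
  sInf ((fun y => y + (1 / (1 - α)) * ∑ s ∈ S, q s * max (s - y) 0) ''
    Set.Icc (S.min' hS) (S.max' hS))

lemma abs_sInf_image_sub_le {K : Set ℝ} (hK : K.Nonempty) (f g : ℝ → ℝ) (ε : ℝ)
    (hbf : BddBelow (f '' K)) (hbg : BddBelow (g '' K))
    (h : ∀ y ∈ K, |f y - g y| ≤ ε) :
    |sInf (f '' K) - sInf (g '' K)| ≤ ε := by
  rw [abs_sub_le_iff]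
  constructor
  · have h2 : sInf (f '' K) - ε ≤ sInf (g '' K) := by
      apply le_csInf (hK.image g)
      rintro b ⟨y, hy, rfl⟩
      have h3 := csInf_le hbf ⟨y, hy, rfl⟩
      have h4 := (abs_sub_le_iff.mp (h y hy)).1
      linarith
    linarith
  · have h2 : sInf (g '' K) - ε ≤ sInf (f '' K) := by
      apply le_csInf (hK.image f)
      rintro b ⟨y, hy, rfl⟩
      have h3 := csInf_le hbg ⟨y, hy, rfl⟩
      have h4 := (abs_sub_le_iff.mp (h y hy)).2
      linarith
    linarith

theorem cvar_continuous_in_distribution (S : Finset ℝ) (hS : S.Nonempty)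
    (α : ℝ) (hα : α ∈ Set.Ioo (0 : ℝ) 1)
    (p : ℕ → ℝ → ℝ) (q : ℝ → ℝ)
    (hp : ∀ t, (∀ s ∈ S, 0 ≤ p t s) ∧ ∑ s ∈ S, p t s = 1)
    (hq : (∀ s ∈ S, 0 ≤ q s) ∧ ∑ s ∈ S, q s = 1)
    (hconv : ∀ s ∈ S, Tendsto (fun t => p t s) atTop (nhds (q s))) :
    Tendsto (fun t => finCVaR S hS α (p t)) atTop (nhds (finCVaR S hS α q)) ∧
    ∀ t, |finCVaR S hS α (p t) - finCVaR S hS α q| ≤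
      ((S.max' hS - S.min' hS) / (1 - α)) * ∑ s ∈ S, |p t s - q s| := by
  obtain ⟨hα0, hα1⟩ := hα
  set L := S.min' hS with hL
  set U := S.max' hS with hU
  have hLU : L ≤ U := S.min'_le (S.max' hS) (S.max'_mem hS)
  set c : ℝ := 1 / (1 - α) with hc
  have hα1' : (0:ℝ) < 1 - α := by linarith
  have hc0 : 0 < c := by positivity
  set K : Set ℝ := Set.Icc L U with hK
  have hKne : K.Nonempty := Set.nonempty_Icc.mpr hLU
  -- bounded below
  have hbdd : ∀ r : ℝ → ℝ, (∀ s ∈ S, 0 ≤ r s) →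
      BddBelow ((fun y => y + c * ∑ s ∈ S, r s * max (s - y) 0) '' K) := by
    intro r hr
    refine ⟨L, ?_⟩
    rintro b ⟨y, hy, rfl⟩
    have hsum : 0 ≤ ∑ s ∈ S, r s * max (s - y) 0 :=
      Finset.sum_nonneg fun s hs => mul_nonneg (hr s hs) (le_max_right _ _)
    have hy1 := hy.1
    have := mul_nonneg hc0.le hsum
    dsimp only
    linarith
  -- the key bound
  have key : ∀ t, |finCVaR S hS α (p t) - finCVaR S hS α q| ≤
      ((U - L) / (1 - α)) * ∑ s ∈ S, |p t s - q s| := by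
    intro t
    unfold finCVaR
    apply abs_sInf_image_sub_le hKne _ _ _ (hbdd _ (hp t).1) (hbdd _ hq.1)
    intro y hy
    have hmax : ∀ s ∈ S, |max (s - y) 0| ≤ U - L := by
      intro s hs
      rw [abs_of_nonneg (le_max_right _ _)]
      apply max_le _ (by linarith)
      have h1 : s ≤ U := S.le_max' s hs
      have h2 : L ≤ y := hy.1
      linarith
    have h1 : |∑ s ∈ S, (p t s - q s) * max (s - y) 0| ≤
        ∑ s ∈ S, |p t s - q s| * (U - L) := by
      refine (Finset.abs_sum_le_sum_abs _ _).trans (Finset.sum_le_sum ?_)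
      intro s hs
      rw [abs_mul]
      exact mul_le_mul_of_nonneg_left (hmax s hs) (abs_nonneg _)
    have heq : (y + c * ∑ s ∈ S, p t s * max (s - y) 0) -
        (y + c * ∑ s ∈ S, q s * max (s - y) 0) =
        c * ∑ s ∈ S, (p t s - q s) * max (s - y) 0 := by
      have hss : ∑ s ∈ S, (p t s - q s) * max (s - y) 0 =
          ∑ s ∈ S, p t s * max (s - y) 0 - ∑ s ∈ S, q s * max (s - y) 0 := by
        rw [← Finset.sum_sub_distrib]
        exact Finset.sum_congr rfl fun s _ => by ring
      rw [hss]; ring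
    rw [heq, abs_mul, abs_of_pos hc0]
    calc c * |∑ s ∈ S, (p t s - q s) * max (s - y) 0|
        ≤ c * ∑ s ∈ S, |p t s - q s| * (U - L) :=
          mul_le_mul_of_nonneg_left h1 hc0.le
      _ = ((U - L) / (1 - α)) * ∑ s ∈ S, |p t s - q s| := by
          rw [← Finset.sum_mul, hc]; ring
  refine ⟨?_, key⟩
  -- convergence
  have hB : Tendsto (fun t => ((U - L) / (1 - α)) * ∑ s ∈ S, |p t s - q s|)
      atTop (nhds 0) := by
    have : Tendsto (fun t => ∑ s ∈ S, |p t s - q s|) atTop (nhds 0) := by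
      have h2 : Tendsto (fun t => ∑ s ∈ S, |p t s - q s|) atTop
          (nhds (∑ s ∈ S, |q s - q s|)) :=
        tendsto_finset_sum S fun s hs =>
          ((hconv s hs).sub (tendsto_const_nhds (x := q s))).abs
      simpa using h2
    simpa using this.const_mul ((U - L) / (1 - α))
  have h0 : Tendsto (fun t => finCVaR S hS α (p t) - finCVaR S hS α q)
      atTop (nhds 0) := by
    apply squeeze_zero_norm _ hB
    intro t
    simpa [Real.norm_eq_abs] using key t
  have := h0.add_const (finCVaR S hS α q)
  simpa using this
end

section
/- Let K be a finite set, r : K → ℝ with minimum L_r and maximum U_r, α ∈ (0,1), and let X ⊆ ℝ^K be a nonempty compact convex set of probability vectors. Define v(x, y) := Σ_{k ∈ K} x(k)·( y + (1/(1−α))·(r(k) − y)^+ ) for x ∈ X, y ∈ [L_r, U_r]. Then max_{x ∈ X} min_{y ∈ [L_r,U_r]} v(x,y) = min_{y ∈ [L_r,U_r]} max_{x ∈ X} v(x,y), and there exists a saddle point (x*, y*) ∈ X × [L_r,U_r] such that v(x, y*) ≤ v(x*, y*) ≤ v(x*, y) for all x ∈ X and y ∈ [L_r, U_r]. -/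
open Finset Set Filter Topology

theorem saddle_aux {K : Type*} [Fintype K] [Nonempty K]
    (r : K → ℝ) (L U : ℝ)
    (hL : IsLeast (Set.range r) L) (hU : IsGreatest (Set.range r) U)
    (c : ℝ) (hc : 1 < c)
    (X : Set (K → ℝ)) (hXne : X.Nonempty) (hXc : IsCompact X)
    (hXconv : Convex ℝ X)
    (hXprob : ∀ x ∈ X, (∀ k, 0 ≤ x k) ∧ ∑ k, x k = 1) :
    ∃ xs ∈ X, ∃ ys ∈ Set.Icc L U,
      (∀ x ∈ X, ∑ k, x k * (ys + c * max (r k - ys) 0) ≤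
        ∑ k, xs k * (ys + c * max (r k - ys) 0)) ∧
      (∀ y ∈ Set.Icc L U, ∑ k, xs k * (ys + c * max (r k - ys) 0) ≤
        ∑ k, xs k * (y + c * max (r k - y) 0)) := by
  have hc0 : (0:ℝ) < c := lt_trans one_pos hc
  have hLU : L ≤ U := hL.2 hU.1
  have hrU : ∀ k, r k ≤ U := fun k => hU.2 ⟨k, rfl⟩
  have hrL : ∀ k, L ≤ r k := fun k => hL.2 ⟨k, rfl⟩
  set v : (K → ℝ) → ℝ → ℝ := fun x y => ∑ k, x k * (y + c * max (r k - y) 0) with hvdef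
  have hvcont : ∀ y, Continuous (fun x : K → ℝ => v x y) := by
    intro y
    exact continuous_finset_sum _ fun k _ => (continuous_apply k).mul continuous_const
  -- pointwise Lipschitz in y
  have hvlip : ∀ x ∈ X, ∀ y y' : ℝ, v x y - v x y' ≤ (1 + c) * |y - y'| := by
    intro x hx y y'
    obtain ⟨hxk, hxsum⟩ := hXprob x hx
    have h1 : v x y - v x y' =
        ∑ k, x k * ((y + c * max (r k - y) 0) - (y' + c * max (r k - y') 0)) := by
      simp [hvdef, mul_sub, Finset.sum_sub_distrib]
    rw [h1]
    calc (∑ k, x k * ((y + c * max (r k - y) 0) - (y' + c * max (r k - y') 0)))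
        ≤ ∑ k, x k * ((1 + c) * |y - y'|) := by
          apply Finset.sum_le_sum
          intro k _
          apply mul_le_mul_of_nonneg_left _ (hxk k)
          have h2 : |max (r k - y) 0 - max (r k - y') 0| ≤ |(r k - y) - (r k - y')| :=
            abs_max_sub_max_le_abs _ _ _
          have h3 : |(r k - y) - (r k - y')| = |y - y'| := by
            rw [show (r k - y) - (r k - y') = -(y - y') by ring, abs_neg]
          have h4 := abs_le.mp (h3 ▸ h2)
          have h5 := le_abs_self (y - y')
          nlinarith [h4.1, h4.2]
      _ = (1 + c) * |y - y'| := by rw [← Finset.sum_mul, hxsum, one_mul]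
  -- maximizers
  have hmaxex : ∀ y : ℝ, ∃ x, x ∈ X ∧ ∀ x' ∈ X, v x' y ≤ v x y := by
    intro y
    obtain ⟨x, hxX, hmax⟩ := hXc.exists_isMaxOn hXne (hvcont y).continuousOn
    exact ⟨x, hxX, fun x' hx' => hmax hx'⟩
  choose xm hxmX hxmmax using hmaxex
  set g : ℝ → ℝ := fun y => v (xm y) y with hgdef
  have hgub : ∀ y, ∀ x ∈ X, v x y ≤ g y := fun y x hx => hxmmax y x hx
  have hglip : ∀ y y' : ℝ, g y - g y' ≤ (1 + c) * |y - y'| := by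
    intro y y'
    have h1 := hvlip (xm y) (hxmX y) y y'
    have h2 : v (xm y) y' ≤ g y' := hgub y' (xm y) (hxmX y)
    have : g y = v (xm y) y := rfl
    linarith
  have hgcont : Continuous g := by
    have hlw : LipschitzWith (Real.toNNReal (1 + c)) g := by
      apply LipschitzWith.of_dist_le_mul
      intro y y'
      rw [Real.dist_eq, Real.dist_eq, Real.coe_toNNReal _ (by positivity)]
      rw [abs_sub_le_iff]
      constructor
      · exact hglip y y'
      · rw [abs_sub_comm]; exact hglip y' y
    exact hlw.continuous
  obtain ⟨ys, hysIcc, hysmin⟩ :=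
    isCompact_Icc.exists_isMinOn (Set.nonempty_Icc.mpr hLU) hgcont.continuousOn
  have hysmin' : ∀ y ∈ Set.Icc L U, g ys ≤ g y := fun y hy => hysmin hy
  -- one-sided derivative weights
  set d : K → ℝ := fun k => if ys < r k then 1 - c else 1 with hddef
  set d' : K → ℝ := fun k => if ys ≤ r k then 1 - c else 1 with hd'def
  set p : (K → ℝ) → ℝ := fun x => ∑ k, x k * d k with hpdef
  set q : (K → ℝ) → ℝ := fun x => ∑ k, x k * d' k with hqdef
  have hdabs : ∀ k, |d k| ≤ c := by
    intro k
    rw [hddef]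
    dsimp only
    split
    · rw [abs_of_nonpos (by linarith)]; linarith
    · rw [abs_one]; linarith
  have hd'abs : ∀ k, |d' k| ≤ c := by
    intro k
    rw [hd'def]
    dsimp only
    split
    · rw [abs_of_nonpos (by linarith)]; linarith
    · rw [abs_one]; linarith
  have hpabs : ∀ x ∈ X, |p x| ≤ c := by
    intro x hx
    obtain ⟨hxk, hxsum⟩ := hXprob x hx
    calc |p x| ≤ ∑ k, |x k * d k| := Finset.abs_sum_le_sum_abs _ _
      _ ≤ ∑ k, x k * c := by
          apply Finset.sum_le_sum
          intro k _
          rw [abs_mul, abs_of_nonneg (hxk k)]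
          exact mul_le_mul_of_nonneg_left (hdabs k) (hxk k)
      _ = c := by rw [← Finset.sum_mul, hxsum, one_mul]
  have hqabs : ∀ x ∈ X, |q x| ≤ c := by
    intro x hx
    obtain ⟨hxk, hxsum⟩ := hXprob x hx
    calc |q x| ≤ ∑ k, |x k * d' k| := Finset.abs_sum_le_sum_abs _ _
      _ ≤ ∑ k, x k * c := by
          apply Finset.sum_le_sum
          intro k _
          rw [abs_mul, abs_of_nonneg (hxk k)]
          exact mul_le_mul_of_nonneg_left (hd'abs k) (hxk k)
      _ = c := by rw [← Finset.sum_mul, hxsum, one_mul]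
  have hqp : ∀ x ∈ X, q x ≤ p x := by
    intro x hx
    obtain ⟨hxk, _⟩ := hXprob x hx
    apply Finset.sum_le_sum
    intro k _
    apply mul_le_mul_of_nonneg_left _ (hxk k)
    rw [hddef, hd'def]
    dsimp only
    rcases lt_trichotomy ys (r k) with h | h | h
    · rw [if_pos (le_of_lt h), if_pos h]
    · rw [if_pos (le_of_eq h), if_neg (by rw [h]; exact lt_irrefl _)]; linarith
    · rw [if_neg (not_le.mpr h), if_neg (not_lt.mpr (le_of_lt h))]
  -- global slope inequalities
  have slope_up : ∀ x ∈ X, ∀ y : ℝ, ys ≤ y → v x ys + (y - ys) * p x ≤ v x y := by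
    intro x hx y hy
    obtain ⟨hxk, _⟩ := hXprob x hx
    have key : ∀ k, x k * (ys + c * max (r k - ys) 0) + (y - ys) * (x k * d k) ≤
        x k * (y + c * max (r k - y) 0) := by
      intro k
      have hk : (ys + c * max (r k - ys) 0) + (y - ys) * d k ≤ y + c * max (r k - y) 0 := by
        rw [hddef]
        dsimp only
        by_cases h : ys < r k
        · rw [if_pos h, max_eq_left (by linarith : (0:ℝ) ≤ r k - ys)]
          have h2 : r k - y ≤ max (r k - y) 0 := le_max_left _ _
          nlinarith
        · rw [if_neg h]
          push_neg at h
          rw [max_eq_right (by linarith : r k - ys ≤ 0)]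
          have h2 : (0:ℝ) ≤ max (r k - y) 0 := le_max_right _ _
          nlinarith
      nlinarith [hxk k, mul_le_mul_of_nonneg_left hk (hxk k)]
    calc v x ys + (y - ys) * p x
        = ∑ k, (x k * (ys + c * max (r k - ys) 0) + (y - ys) * (x k * d k)) := by
          rw [hvdef, hpdef]
          dsimp only
          rw [Finset.sum_add_distrib, Finset.mul_sum]
      _ ≤ ∑ k, x k * (y + c * max (r k - y) 0) := Finset.sum_le_sum fun k _ => key k
      _ = v x y := rfl
  have slope_down : ∀ x ∈ X, ∀ y : ℝ, y ≤ ys → v x ys + (y - ys) * q x ≤ v x y := by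
    intro x hx y hy
    obtain ⟨hxk, _⟩ := hXprob x hx
    have key : ∀ k, x k * (ys + c * max (r k - ys) 0) + (y - ys) * (x k * d' k) ≤
        x k * (y + c * max (r k - y) 0) := by
      intro k
      have hk : (ys + c * max (r k - ys) 0) + (y - ys) * d' k ≤ y + c * max (r k - y) 0 := by
        rw [hd'def]
        dsimp only
        by_cases h : ys ≤ r k
        · rw [if_pos h, max_eq_left (by linarith : (0:ℝ) ≤ r k - ys),
            max_eq_left (by linarith : (0:ℝ) ≤ r k - y)]
          ring_nf
          nlinarith
        · rw [if_neg h]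
          push_neg at h
          rw [max_eq_right (by linarith : r k - ys ≤ 0)]
          have h2 : (0:ℝ) ≤ max (r k - y) 0 := le_max_right _ _
          nlinarith
      nlinarith [hxk k, mul_le_mul_of_nonneg_left hk (hxk k)]
    calc v x ys + (y - ys) * q x
        = ∑ k, (x k * (ys + c * max (r k - ys) 0) + (y - ys) * (x k * d' k)) := by
          rw [hvdef, hqdef]
          dsimp only
          rw [Finset.sum_add_distrib, Finset.mul_sum]
      _ ≤ ∑ k, x k * (y + c * max (r k - y) 0) := Finset.sum_le_sum fun k _ => key k
      _ = v x y := rfl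
  have hpcont : Continuous p := by
    exact continuous_finset_sum _ fun k _ => (continuous_apply k).mul continuous_const
  have hqcont : Continuous q := by
    exact continuous_finset_sum _ fun k _ => (continuous_apply k).mul continuous_const
  -- construction of x1 with nonneg right slope
  have hx1 : ys < U → ∃ x ∈ X, g ys ≤ v x ys ∧ 0 ≤ p x := by
    intro hysU
    -- find yh in (ys, U] with no r k in (ys, yh)
    obtain ⟨yh, hyh1, hyh2, hyh3⟩ :
        ∃ yh : ℝ, ys < yh ∧ yh ≤ U ∧ ∀ k, ys < r k → yh ≤ r k := by
      by_cases hF : (Finset.univ.filter (fun k => ys < r k)).Nonempty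
      · refine ⟨min ((Finset.univ.filter (fun k => ys < r k)).inf' hF r) U, ?_, min_le_right _ _, ?_⟩
        · apply lt_min _ hysU
          rw [Finset.lt_inf'_iff]
          intro k hk
          exact (Finset.mem_filter.mp hk).2
        · intro k hk
          exact le_trans (min_le_left _ _)
            (Finset.inf'_le r (Finset.mem_filter.mpr ⟨Finset.mem_univ k, hk⟩))
      · refine ⟨U, hysU, le_refl _, fun k hk => absurd ?_ hF⟩
        exact ⟨k, Finset.mem_filter.mpr ⟨Finset.mem_univ k, hk⟩⟩
    -- affinity of v on [ys, yh]
    have haff : ∀ x : K → ℝ, ∀ t : ℝ, 0 ≤ t → ys + t ≤ yh →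
        v x (ys + t) = v x ys + t * p x := by
      intro x t ht0 htle
      have hkey : ∀ k, x k * ((ys + t) + c * max (r k - (ys + t)) 0) =
          x k * (ys + c * max (r k - ys) 0) + t * (x k * d k) := by
        intro k
        have : ((ys + t) + c * max (r k - (ys + t)) 0) =
            (ys + c * max (r k - ys) 0) + t * d k := by
          rw [hddef]
          dsimp only
          by_cases h : ys < r k
          · rw [if_pos h]
            have h1 : yh ≤ r k := hyh3 k h
            rw [max_eq_left (by linarith : (0:ℝ) ≤ r k - (ys + t)),
              max_eq_left (by linarith : (0:ℝ) ≤ r k - ys)]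
            ring
          · rw [if_neg h]
            push_neg at h
            rw [max_eq_right (by linarith : r k - (ys + t) ≤ 0),
              max_eq_right (by linarith : r k - ys ≤ 0)]
            ring
        rw [this]; ring
      rw [hvdef, hpdef]
      dsimp only
      rw [Finset.mul_sum, ← Finset.sum_add_distrib]
      exact Finset.sum_congr rfl fun k _ => hkey k
    -- nested compact sets
    set S : ℕ → Set (K → ℝ) := fun n =>
      {x | x ∈ X ∧ 0 ≤ p x ∧ g ys - c * ((yh - ys) / (n + 1)) ≤ v x ys} with hSdef
    have hSsub : ∀ n, S n ⊆ X := fun n x hx => hx.1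
    have hSclosed : ∀ n, IsClosed (S n) := by
      intro n
      have : S n = X ∩ (p ⁻¹' Set.Ici 0) ∩
          ((fun x => v x ys) ⁻¹' Set.Ici (g ys - c * ((yh - ys) / (n + 1)))) := by
        ext x
        simp only [hSdef, Set.mem_setOf_eq, Set.mem_inter_iff, Set.mem_preimage, Set.mem_Ici]
        tauto
      rw [this]
      exact (hXc.isClosed.inter (isClosed_Ici.preimage hpcont)).inter
        (isClosed_Ici.preimage (hvcont ys))
    have hSne : ∀ n, (S n).Nonempty := by
      intro n
      set t : ℝ := (yh - ys) / (n + 1) with htdef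
      have hn1 : (0:ℝ) < n + 1 := by positivity
      have ht0 : 0 < t := div_pos (by linarith) hn1
      have htle : ys + t ≤ yh := by
        have : t ≤ yh - ys := by
          rw [htdef]
          apply div_le_self (by linarith)
          simp
        linarith
      set x' := xm (ys + t) with hx'def
      have hx'X : x' ∈ X := hxmX _
      have hIcc : ys + t ∈ Set.Icc L U := ⟨by linarith [hysIcc.1], by linarith⟩
      have hg1 : g ys ≤ g (ys + t) := hysmin' _ hIcc
      have hg2 : g (ys + t) = v x' (ys + t) := rfl
      have haffx : v x' (ys + t) = v x' ys + t * p x' := haff x' t (le_of_lt ht0) htle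
      have hvle : v x' ys ≤ g ys := hgub ys x' hx'X
      have hp0 : 0 ≤ p x' := by
        have h1 : 0 ≤ t * p x' := by linarith
        exact nonneg_of_mul_nonneg_right h1 ht0
      have hpc : p x' ≤ c := le_trans (le_abs_self _) (hpabs x' hx'X)
      refine ⟨x', hx'X, hp0, ?_⟩
      rw [← htdef]
      have : t * p x' ≤ t * c := mul_le_mul_of_nonneg_left hpc (le_of_lt ht0)
      have hcm : c * t = t * c := mul_comm _ _
      linarith
    have hSmono : ∀ n, S (n + 1) ⊆ S n := by
      intro n x hx
      refine ⟨hx.1, hx.2.1, le_trans ?_ hx.2.2⟩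
      have h1 : (yh - ys) / (n + 1 + 1) ≤ (yh - ys) / (n + 1) := by
        apply div_le_div_of_nonneg_left (by linarith) (by positivity) (by linarith)
      push_cast
      nlinarith
    have hScompact : IsCompact (S 0) := hXc.of_isClosed_subset (hSclosed 0) (hSsub 0)
    obtain ⟨x1, hx1mem⟩ :=
      IsCompact.nonempty_iInter_of_sequence_nonempty_isCompact_isClosed S hSmono hSne
        hScompact hSclosed
    simp only [Set.mem_iInter] at hx1mem
    have hx1X : x1 ∈ X := (hx1mem 0).1
    have hx1p : 0 ≤ p x1 := (hx1mem 0).2.1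
    refine ⟨x1, hx1X, ?_, hx1p⟩
    have htend : Tendsto (fun n : ℕ => g ys - c * ((yh - ys) / (n + 1))) atTop (𝓝 (g ys)) := by
      have h1 : Tendsto (fun n : ℕ => (yh - ys) / (n + 1)) atTop (𝓝 0) := by
        have := tendsto_one_div_add_atTop_nhds_zero_nat (𝕜 := ℝ)
        have h2 := this.const_mul (yh - ys)
        simp only [mul_one_div] at h2
        convert h2 using 2 with n
        norm_num
      have h2 := (h1.const_mul c).const_sub (g ys)
      simpa using h2
    exact le_of_tendsto htend (Filter.Eventually.of_forall fun n => (hx1mem n).2.2)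
  -- construction of x2 with nonpos left slope
  have hx2 : L < ys → ∃ x ∈ X, g ys ≤ v x ys ∧ q x ≤ 0 := by
    intro hLys
    obtain ⟨yl, hyl1, hyl2, hyl3⟩ :
        ∃ yl : ℝ, yl < ys ∧ L ≤ yl ∧ ∀ k, r k < ys → r k ≤ yl := by
      by_cases hF : (Finset.univ.filter (fun k => r k < ys)).Nonempty
      · refine ⟨max ((Finset.univ.filter (fun k => r k < ys)).sup' hF r) L, ?_, le_max_right _ _, ?_⟩
        · apply max_lt _ hLys
          rw [Finset.sup'_lt_iff]
          intro k hk
          exact (Finset.mem_filter.mp hk).2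
        · intro k hk
          exact le_trans
            (Finset.le_sup' r (Finset.mem_filter.mpr ⟨Finset.mem_univ k, hk⟩)) (le_max_left _ _)
      · refine ⟨L, hLys, le_refl _, fun k hk => absurd ?_ hF⟩
        exact ⟨k, Finset.mem_filter.mpr ⟨Finset.mem_univ k, hk⟩⟩
    have haff : ∀ x : K → ℝ, ∀ t : ℝ, 0 ≤ t → yl ≤ ys - t →
        v x (ys - t) = v x ys - t * q x := by
      intro x t ht0 htle
      have hkey : ∀ k, x k * ((ys - t) + c * max (r k - (ys - t)) 0) =
          x k * (ys + c * max (r k - ys) 0) - t * (x k * d' k) := by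
        intro k
        have : ((ys - t) + c * max (r k - (ys - t)) 0) =
            (ys + c * max (r k - ys) 0) - t * d' k := by
          rw [hd'def]
          dsimp only
          by_cases h : ys ≤ r k
          · rw [if_pos h]
            rw [max_eq_left (by linarith : (0:ℝ) ≤ r k - (ys - t)),
              max_eq_left (by linarith : (0:ℝ) ≤ r k - ys)]
            ring
          · rw [if_neg h]
            push_neg at h
            have h1 : r k ≤ yl := hyl3 k h
            rw [max_eq_right (by linarith : r k - (ys - t) ≤ 0),
              max_eq_right (by linarith : r k - ys ≤ 0)]
            ring
        rw [this]; ring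
      rw [hvdef, hqdef]
      dsimp only
      rw [Finset.mul_sum, ← Finset.sum_sub_distrib]
      exact Finset.sum_congr rfl fun k _ => hkey k
    set S : ℕ → Set (K → ℝ) := fun n =>
      {x | x ∈ X ∧ q x ≤ 0 ∧ g ys - c * ((ys - yl) / (n + 1)) ≤ v x ys} with hSdef
    have hSsub : ∀ n, S n ⊆ X := fun n x hx => hx.1
    have hSclosed : ∀ n, IsClosed (S n) := by
      intro n
      have : S n = X ∩ (q ⁻¹' Set.Iic 0) ∩
          ((fun x => v x ys) ⁻¹' Set.Ici (g ys - c * ((ys - yl) / (n + 1)))) := by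
        ext x
        simp only [hSdef, Set.mem_setOf_eq, Set.mem_inter_iff, Set.mem_preimage,
          Set.mem_Ici, Set.mem_Iic]
        tauto
      rw [this]
      exact (hXc.isClosed.inter (isClosed_Iic.preimage hqcont)).inter
        (isClosed_Ici.preimage (hvcont ys))
    have hSne : ∀ n, (S n).Nonempty := by
      intro n
      set t : ℝ := (ys - yl) / (n + 1) with htdef
      have hn1 : (0:ℝ) < n + 1 := by positivity
      have ht0 : 0 < t := div_pos (by linarith) hn1
      have htle : yl ≤ ys - t := by
        have : t ≤ ys - yl := by
          rw [htdef]
          apply div_le_self (by linarith)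
          simp
        linarith
      set x' := xm (ys - t) with hx'def
      have hx'X : x' ∈ X := hxmX _
      have hIcc : ys - t ∈ Set.Icc L U := ⟨by linarith, by linarith [hysIcc.2]⟩
      have hg1 : g ys ≤ g (ys - t) := hysmin' _ hIcc
      have hg2 : g (ys - t) = v x' (ys - t) := rfl
      have haffx : v x' (ys - t) = v x' ys - t * q x' := haff x' t (le_of_lt ht0) htle
      have hvle : v x' ys ≤ g ys := hgub ys x' hx'X
      have hq0 : q x' ≤ 0 := by
        have h1 : 0 ≤ t * (-(q x')) := by nlinarith
        have h2 := nonneg_of_mul_nonneg_right h1 ht0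
        linarith
      have hqc : -c ≤ q x' := neg_le_of_abs_le (hqabs x' hx'X)
      refine ⟨x', hx'X, hq0, ?_⟩
      rw [← htdef]
      have : t * (-c) ≤ t * q x' := mul_le_mul_of_nonneg_left hqc (le_of_lt ht0)
      nlinarith
    have hSmono : ∀ n, S (n + 1) ⊆ S n := by
      intro n x hx
      refine ⟨hx.1, hx.2.1, le_trans ?_ hx.2.2⟩
      have h1 : (ys - yl) / ((n:ℝ) + 1 + 1) ≤ (ys - yl) / (n + 1) := by
        apply div_le_div_of_nonneg_left (by linarith) (by positivity) (by linarith)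
      push_cast
      nlinarith
    have hScompact : IsCompact (S 0) := hXc.of_isClosed_subset (hSclosed 0) (hSsub 0)
    obtain ⟨x2, hx2mem⟩ :=
      IsCompact.nonempty_iInter_of_sequence_nonempty_isCompact_isClosed S hSmono hSne
        hScompact hSclosed
    simp only [Set.mem_iInter] at hx2mem
    refine ⟨x2, (hx2mem 0).1, ?_, (hx2mem 0).2.1⟩
    have htend : Tendsto (fun n : ℕ => g ys - c * ((ys - yl) / (n + 1))) atTop (𝓝 (g ys)) := by
      have h1 : Tendsto (fun n : ℕ => (ys - yl) / (n + 1)) atTop (𝓝 0) := by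
        have := tendsto_one_div_add_atTop_nhds_zero_nat (𝕜 := ℝ)
        have h2 := this.const_mul (ys - yl)
        simp only [mul_one_div] at h2
        convert h2 using 2 with n
        norm_num
      have h2 := (h1.const_mul c).const_sub (g ys)
      simpa using h2
    exact le_of_tendsto htend (Filter.Eventually.of_forall fun n => (hx2mem n).2.2)
  -- combine into a single saddle candidate
  have hmain : ∃ x ∈ X, g ys ≤ v x ys ∧ (L < ys → q x ≤ 0) ∧ (ys < U → 0 ≤ p x) := by
    by_cases hysU : ys < U
    · obtain ⟨x1, hx1X, hx1g, hx1p⟩ := hx1 hysU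
      by_cases hLys : L < ys
      · obtain ⟨x2, hx2X, hx2g, hx2q⟩ := hx2 hLys
        by_cases hp2 : 0 ≤ p x2
        · exact ⟨x2, hx2X, hx2g, fun _ => hx2q, fun _ => hp2⟩
        · push_neg at hp2
          set t : ℝ := (-(p x2)) / (p x1 - p x2) with htdef
          have hden : 0 < p x1 - p x2 := by linarith
          have ht0 : 0 ≤ t := div_nonneg (by linarith) (le_of_lt hden)
          have ht1 : t ≤ 1 := by rw [div_le_one hden]; linarith
          set xt : K → ℝ := t • x1 + (1 - t) • x2 with hxtdef
          have hxtX : xt ∈ X := hXconv hx1X hx2X ht0 (by linarith) (by ring)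
          have hcomb : ∀ w : K → ℝ, (∑ k, xt k * w k) =
              t * (∑ k, x1 k * w k) + (1 - t) * (∑ k, x2 k * w k) := by
            intro w
            rw [Finset.mul_sum, Finset.mul_sum, ← Finset.sum_add_distrib]
            apply Finset.sum_congr rfl
            intro k _
            simp only [hxtdef, Pi.add_apply, Pi.smul_apply, smul_eq_mul]
            ring
          have hpt : p xt = t * p x1 + (1 - t) * p x2 := hcomb d
          have hvt : v xt ys = t * v x1 ys + (1 - t) * v x2 ys := hcomb _
          have hv1 : v x1 ys = g ys := le_antisymm (hgub ys x1 hx1X) hx1g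
          have hv2 : v x2 ys = g ys := le_antisymm (hgub ys x2 hx2X) hx2g
          have hpt0 : p xt = 0 := by
            rw [hpt, htdef]
            field_simp
            ring
          have hqt0 : q xt ≤ 0 := by
            have := hqp xt hxtX
            rw [hpt0] at this
            exact this
          refine ⟨xt, hxtX, ?_, fun _ => hqt0, fun _ => le_of_eq hpt0.symm⟩
          rw [hvt, hv1, hv2]
          have : t * g ys + (1 - t) * g ys = g ys := by ring
          linarith
      · exact ⟨x1, hx1X, hx1g, fun h => absurd h hLys, fun _ => hx1p⟩
    · push_neg at hysU
      by_cases hLys : L < ys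
      · obtain ⟨x2, hx2X, hx2g, hx2q⟩ := hx2 hLys
        exact ⟨x2, hx2X, hx2g, fun _ => hx2q, fun h => absurd h (not_lt.mpr hysU)⟩
      · exact ⟨xm ys, hxmX ys, le_refl _, fun h => absurd h hLys,
          fun h => absurd h (not_lt.mpr hysU)⟩
  obtain ⟨xs, hxsX, hxsg, hqcond, hpcond⟩ := hmain
  refine ⟨xs, hxsX, ys, hysIcc, ?_, ?_⟩
  · intro x hx
    exact le_trans (hgub ys x hx) hxsg
  · intro y hy
    rcases lt_trichotomy y ys with h | h | h
    · have hLys : L < ys := lt_of_le_of_lt hy.1 h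
      have hs := slope_down xs hxsX y (le_of_lt h)
      have hq0 := hqcond hLys
      have hprod : 0 ≤ (y - ys) * q xs := by nlinarith
      have : v xs ys ≤ v xs y := by linarith
      exact this
    · rw [h]
    · have hysU' : ys < U := lt_of_lt_of_le h hy.2
      have hs := slope_up xs hxsX y (le_of_lt h)
      have hp0 := hpcond hysU'
      have hprod : 0 ≤ (y - ys) * p xs := mul_nonneg (by linarith) hp0
      have : v xs ys ≤ v xs y := by linarith
      exact this

theorem cvar_minimax_saddle {K : Type*} [Fintype K] [Nonempty K]
    (r : K → ℝ) (L U : ℝ)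
    (hL : IsLeast (Set.range r) L) (hU : IsGreatest (Set.range r) U)
    (α : ℝ) (hα : α ∈ Set.Ioo (0 : ℝ) 1)
    (X : Set (K → ℝ)) (hXne : X.Nonempty) (hXc : IsCompact X)
    (hXconv : Convex ℝ X)
    (hXprob : ∀ x ∈ X, (∀ k, 0 ≤ x k) ∧ ∑ k, x k = 1) :
    (⨆ x : X, ⨅ y : Set.Icc L U,
        ∑ k, (x : K → ℝ) k * ((y : ℝ) + (1 / (1 - α)) * max (r k - y) 0)) =
      (⨅ y : Set.Icc L U, ⨆ x : X,
        ∑ k, (x : K → ℝ) k * ((y : ℝ) + (1 / (1 - α)) * max (r k - y) 0)) ∧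
    ∃ xs ∈ X, ∃ ys ∈ Set.Icc L U,
      (∀ x ∈ X, ∑ k, x k * (ys + (1 / (1 - α)) * max (r k - ys) 0) ≤
        ∑ k, xs k * (ys + (1 / (1 - α)) * max (r k - ys) 0)) ∧
      (∀ y ∈ Set.Icc L U, ∑ k, xs k * (ys + (1 / (1 - α)) * max (r k - ys) 0) ≤
        ∑ k, xs k * (y + (1 / (1 - α)) * max (r k - y) 0)) := by
  obtain ⟨hα0, hα1⟩ := hα
  have h1α : (0:ℝ) < 1 - α := by linarith
  have hc : 1 < 1 / (1 - α) := by
    rw [lt_div_iff₀ h1α]; linarith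
  have hc0 : (0:ℝ) < 1 / (1 - α) := lt_trans one_pos hc
  have hLU : L ≤ U := hL.2 hU.1
  have hrU : ∀ k, r k ≤ U := fun k => hU.2 ⟨k, rfl⟩
  have hrL : ∀ k, L ≤ r k := fun k => hL.2 ⟨k, rfl⟩
  obtain ⟨xs, hxsX, ys, hysIcc, hsad1, hsad2⟩ :=
    saddle_aux r L U hL hU _ hc X hXne hXc hXconv hXprob
  refine ⟨?_, xs, hxsX, ys, hysIcc, hsad1, hsad2⟩
  haveI : Nonempty X := hXne.to_subtype
  haveI : Nonempty (Set.Icc L U) := ⟨⟨ys, hysIcc⟩⟩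
  -- bounds
  have hlow : ∀ x ∈ X, ∀ y ∈ Set.Icc L U,
      L ≤ ∑ k, x k * (y + (1 / (1 - α)) * max (r k - y) 0) := by
    intro x hx y hy
    obtain ⟨hxk, hxsum⟩ := hXprob x hx
    calc L = ∑ k, x k * L := by rw [← Finset.sum_mul, hxsum, one_mul]
      _ ≤ ∑ k, x k * (y + (1 / (1 - α)) * max (r k - y) 0) := by
          apply Finset.sum_le_sum
          intro k _
          apply mul_le_mul_of_nonneg_left _ (hxk k)
          have hmax : (0:ℝ) ≤ max (r k - y) 0 := le_max_right _ _
          nlinarith [hy.1]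
  have hhigh : ∀ x ∈ X, ∀ y ∈ Set.Icc L U,
      (∑ k, x k * (y + (1 / (1 - α)) * max (r k - y) 0)) ≤ U + (1/(1-α)) * (U - L) := by
    intro x hx y hy
    obtain ⟨hxk, hxsum⟩ := hXprob x hx
    calc (∑ k, x k * (y + (1 / (1 - α)) * max (r k - y) 0))
        ≤ ∑ k, x k * (U + (1/(1-α)) * (U - L)) := by
          apply Finset.sum_le_sum
          intro k _
          apply mul_le_mul_of_nonneg_left _ (hxk k)
          have hmax : max (r k - y) 0 ≤ U - L := by
            apply max_le (by nlinarith [hrU k, hy.1]) (by linarith)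
          nlinarith [hy.2]
      _ = U + (1/(1-α)) * (U - L) := by rw [← Finset.sum_mul, hxsum, one_mul]
  set s : ℝ := ∑ k, xs k * (ys + (1 / (1 - α)) * max (r k - ys) 0) with hs
  have hBddB : ∀ x : X, BddBelow (Set.range fun y : Set.Icc L U =>
      ∑ k, (x : K → ℝ) k * ((y:ℝ) + (1 / (1 - α)) * max (r k - y) 0)) := by
    intro x
    exact ⟨L, by rintro z ⟨y, rfl⟩; exact hlow x x.2 y y.2⟩
  have hBddA : ∀ y : Set.Icc L U, BddAbove (Set.range fun x : X =>
      ∑ k, (x : K → ℝ) k * ((y:ℝ) + (1 / (1 - α)) * max (r k - y) 0)) := by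
    intro y
    exact ⟨U + (1/(1-α)) * (U - L), by rintro z ⟨x, rfl⟩; exact hhigh x x.2 y y.2⟩
  have hleft : (⨆ x : X, ⨅ y : Set.Icc L U,
      ∑ k, (x : K → ℝ) k * ((y : ℝ) + (1 / (1 - α)) * max (r k - y) 0)) = s := by
    apply le_antisymm
    · apply ciSup_le
      intro x
      exact ciInf_le_of_le (hBddB x) ⟨ys, hysIcc⟩ (hsad1 x x.2)
    · apply le_ciSup_of_le ?_ (⟨xs, hxsX⟩ : X)
      · exact le_ciInf fun y => hsad2 y y.2
      · refine ⟨U + (1/(1-α)) * (U - L), ?_⟩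
        rintro z ⟨x, rfl⟩
        exact ciInf_le_of_le (hBddB x) ⟨ys, hysIcc⟩ (hhigh x x.2 ys hysIcc)
  have hright : (⨅ y : Set.Icc L U, ⨆ x : X,
      ∑ k, (x : K → ℝ) k * ((y : ℝ) + (1 / (1 - α)) * max (r k - y) 0)) = s := by
    apply le_antisymm
    · refine ciInf_le_of_le ⟨L, ?_⟩ ⟨ys, hysIcc⟩ (ciSup_le fun x => hsad1 x x.2)
      rintro z ⟨y, rfl⟩
      exact le_ciSup_of_le (hBddA y) (⟨xs, hxsX⟩ : X) (hlow xs hxsX y y.2)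
    · exact le_ciInf fun y =>
        le_ciSup_of_le (hBddA y) (⟨xs, hxsX⟩ : X) (hsad2 y y.2)
  rw [hleft, hright]
end
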